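/- If c1*(a3 + a5) < a2*a4*c2 and all parameters are positive, then the quartic P(u) = -(a2*c2/c1)*u^4 - a1*u^3 + (a3 + a5 - a2*a4*c2/c1)*u^2 - a1*a4*u + a4*a5 has exactly one sign change in its coefficient sequence, and therefore (by Descartes' rule of signs) exactly one positive real root. -/
import Mathlib


/-- If `c1*(a3+a5) < a2*a4*c2` then the coefficient sequence of the quartic `P`
has exactly one sign change, and `P` has exactly one positive real root. -/
theorem quartic_one_sign_change_unique_pos_root
    (a1 a2 a3 a4 a5 c1 c2 : ℝ)
    (ha1 : 0 < a1) (ha2 : 0 < a2) (ha3 : 0 < a3) (ha4 : 0 < a4) (ha5 : 0 < a5)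
    (hc1 : 0 < c1) (hc2 : 0 < c2)
    (hcond : c1 * (a3 + a5) < a2 * a4 * c2) :
    -- coefficient sequence in descending degree
    (let coeffs : Fin 5 → ℝ :=
      ![-(a2 * c2 / c1), -a1, a3 + a5 - a2 * a4 * c2 / c1, -a1 * a4, a4 * a5]
     (Finset.univ.filter
        (fun i : Fin 4 => coeffs i.castSucc * coeffs i.succ < 0)).card = 1) ∧
    (∃! u : ℝ, 0 < u ∧
        -(a2 * c2 / c1) * u ^ 4 - a1 * u ^ 3
          + (a3 + a5 - a2 * a4 * c2 / c1) * u ^ 2 - a1 * a4 * u + a4 * a5 = 0) := by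
  have hA : 0 < a2 * c2 / c1 := by positivity
  have hC : a3 + a5 - a2 * a4 * c2 / c1 < 0 := by
    rw [sub_neg, lt_div_iff₀ hc1]; linarith
  set f : ℝ → ℝ := fun u => -(a2 * c2 / c1) * u ^ 4 - a1 * u ^ 3
      + (a3 + a5 - a2 * a4 * c2 / c1) * u ^ 2 - a1 * a4 * u + a4 * a5 with hf
  have hanti : ∀ u v : ℝ, 0 ≤ u → u < v → f v < f u := by
    intro u v hu huv
    have h4 : u ^ 4 < v ^ 4 := pow_lt_pow_left₀ huv hu (by norm_num)
    have h3 : u ^ 3 < v ^ 3 := pow_lt_pow_left₀ huv hu (by norm_num)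
    have h2 : u ^ 2 < v ^ 2 := pow_lt_pow_left₀ huv hu (by norm_num)
    have t1 : 0 < (a2 * c2 / c1) * (v ^ 4 - u ^ 4) := mul_pos hA (by linarith)
    have t2 : 0 < a1 * (v ^ 3 - u ^ 3) := mul_pos ha1 (by linarith)
    have t3 : 0 < (a2 * a4 * c2 / c1 - (a3 + a5)) * (v ^ 2 - u ^ 2) :=
      mul_pos (by linarith) (by linarith)
    have t4 : 0 < a1 * a4 * (v - u) := mul_pos (mul_pos ha1 ha4) (by linarith)
    simp only [hf]; nlinarith [t1, t2, t3, t4]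
  constructor
  · intro coeffs
    rw [show (Finset.univ.filter (fun i : Fin 4 => coeffs i.castSucc * coeffs i.succ < 0)) = {3} from ?_]
    · rfl
    ext i
    fin_cases i <;>
      simp [coeffs, Fin.castSucc, Fin.castAdd, Fin.castLE, not_lt, Fin.succ,
        Matrix.cons_val_succ, Matrix.cons_val_zero, Fin.mk_zero, Fin.mk_one,
        show ((3:Fin 4):ℕ)=3 from rfl] <;>
      nlinarith [mul_pos hA ha1, mul_pos ha1 ha4, mul_pos ha4 ha5]
  · have hf0 : 0 < f 0 := by simp [hf]; positivity
    set M : ℝ := max 1 (a4 * a5 / a1) with hM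
    have hM1 : (1:ℝ) ≤ M := le_max_left _ _
    have hM0 : 0 < M := lt_of_lt_of_le one_pos hM1
    have hMle : a4 * a5 / a1 ≤ M := le_max_right _ _
    have hfM : f M ≤ 0 := by
      have h1 : a4 * a5 ≤ a1 * M := by
        rw [div_le_iff₀ ha1] at hMle; linarith
      have h2 : M ≤ M ^ 3 := by nlinarith [mul_le_mul_of_nonneg_left hM1 (le_of_lt hM0), sq_nonneg (M-1), sq_nonneg M]
      have : a4 * a5 ≤ a1 * M ^ 3 := le_trans h1 (by nlinarith)
      simp only [hf]
      nlinarith [mul_pos hA (pow_pos hM0 4), mul_pos (mul_pos ha1 ha4) hM0,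
        mul_pos (sub_pos.2 hC) (pow_pos hM0 2), sq_nonneg M, hC, pow_pos hM0 2]
    have hcont : ContinuousOn f (Set.Icc 0 M) := by
      apply Continuous.continuousOn; simp only [hf]; fun_prop
    obtain ⟨u, hu_mem, hu_eq⟩ :=
      intermediate_value_Icc' (le_of_lt hM0) hcont (Set.mem_Icc.mpr ⟨hfM, le_of_lt hf0⟩)
    have hu_pos : 0 < u := by
      rcases eq_or_lt_of_le hu_mem.1 with h | h
      · exfalso; rw [← h] at hu_eq; rw [hu_eq] at hf0; exact lt_irrefl _ hf0
      · exact h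
    refine ⟨u, ⟨hu_pos, hu_eq⟩, ?_⟩
    rintro v ⟨hv_pos, hv_eq⟩
    have hfv : f v = 0 := hv_eq
    by_contra hne
    rcases lt_or_gt_of_ne hne with h | h
    · have := hanti v u (le_of_lt hv_pos) h
      rw [hu_eq, hfv] at this; exact lt_irrefl _ this
    · have := hanti u v (le_of_lt hu_pos) h
      rw [hu_eq, hfv] at this; exact lt_irrefl _ this
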